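/- For every real c ≥ 1, ∫_c^∞ √(1 + log t)/t² dt ≤ 2·√(1 + log c)/c. -/

import Mathlib

open MeasureTheory Real

/-- For `c ≥ 1`, `∫_c^∞ √(1 + log t)/t² dt ≤ 2·√(1 + log c)/c`. -/
theorem integral_sqrt_one_add_log_div_sq_le
    (c : ℝ) (hc : 1 ≤ c) :
    (∫ t in Set.Ici c, Real.sqrt (1 + Real.log t) / t ^ 2)
      ≤ 2 * Real.sqrt (1 + Real.log c) / c := by
  set F : ℝ → ℝ := fun t => -(2 * Real.sqrt (1 + Real.log t) / t) with hF
  set g : ℝ → ℝ := fun t =>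
    (2 * Real.sqrt (1 + Real.log t) - 1 / Real.sqrt (1 + Real.log t)) / t ^ 2 with hg
  -- basic facts for t ≥ 1
  have key : ∀ t : ℝ, 1 ≤ t → (0 < t ∧ 1 ≤ Real.sqrt (1 + Real.log t)) := by
    intro t ht
    have h1 : (0:ℝ) < t := lt_of_lt_of_le one_pos ht
    have h2 : 0 ≤ Real.log t := Real.log_nonneg ht
    refine ⟨h1, ?_⟩
    have := Real.sqrt_le_sqrt (show (1:ℝ) ≤ 1 + Real.log t by linarith)
    simpa using this
  -- derivative
  have hderiv : ∀ t ∈ Set.Ici c, HasDerivAt F (g t) t := by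
    intro t ht
    have ht1 : 1 ≤ t := le_trans hc ht
    obtain ⟨htpos, hs1⟩ := key t ht1
    have hspos : 0 < Real.sqrt (1 + Real.log t) := lt_of_lt_of_le one_pos hs1
    have hlogpos : 0 < 1 + Real.log t := by
      nlinarith [Real.log_nonneg ht1]
    have hlog : HasDerivAt (fun x : ℝ => 1 + Real.log x) (1 / t) t := by
      simpa using ((Real.hasDerivAt_log (ne_of_gt htpos)).const_add 1)
    have hsqrt : HasDerivAt (fun x : ℝ => Real.sqrt (1 + Real.log x))
        (1 / t / (2 * Real.sqrt (1 + Real.log t))) t :=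
      hlog.sqrt (ne_of_gt hlogpos)
    have hid : HasDerivAt (fun x : ℝ => x) 1 t := hasDerivAt_id t
    have hdiv := ((hsqrt.const_mul 2).div hid (ne_of_gt htpos)).neg
    convert hdiv using 1
    · rfl
    · rfl
    · rfl
    have hs2 : Real.sqrt (1 + Real.log t) ^ 2 = 1 + Real.log t :=
      Real.sq_sqrt (le_of_lt hlogpos)
    simp only [hg]
    field_simp
    ring_nf
  -- nonnegativity of g
  have hgpos : ∀ t ∈ Set.Ioi c, 0 ≤ g t := by
    intro t ht
    have ht1 : 1 ≤ t := le_trans hc (le_of_lt ht)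
    obtain ⟨htpos, hs1⟩ := key t ht1
    have h1 : 1 / Real.sqrt (1 + Real.log t) ≤ 1 := by
      rw [div_le_one (lt_of_lt_of_le one_pos hs1)]; exact hs1
    apply div_nonneg _ (sq_nonneg t)
    nlinarith
  -- tendsto of F at top
  have htend : Filter.Tendsto F Filter.atTop (nhds 0) := by
    rw [show (0:ℝ) = -(2 * 0) by ring]
    apply Filter.Tendsto.neg
    simp only [hF, mul_div_assoc]
    apply Filter.Tendsto.const_mul
    have hbound : ∀ᶠ t in Filter.atTop, Real.sqrt (1 + Real.log t) / t
        ≤ (1 + Real.log t) / t := by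
      filter_upwards [Filter.eventually_ge_atTop (1:ℝ)] with t ht
      obtain ⟨htpos, hs1⟩ := key t ht
      apply div_le_div_of_nonneg_right _ htpos.le
      · calc Real.sqrt (1 + Real.log t) ≤ Real.sqrt (1 + Real.log t) ^ 2 := by
              nlinarith
          _ = 1 + Real.log t := Real.sq_sqrt (by nlinarith [Real.log_nonneg ht])
    have hnn : ∀ᶠ t in Filter.atTop, 0 ≤ Real.sqrt (1 + Real.log t) / t := by
      filter_upwards [Filter.eventually_ge_atTop (1:ℝ)] with t ht
      exact div_nonneg (Real.sqrt_nonneg _) (by linarith)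
    have hupper : Filter.Tendsto (fun t : ℝ => (1 + Real.log t) / t)
        Filter.atTop (nhds 0) := by
      have hlog : Filter.Tendsto (fun x : ℝ => Real.log x / x) Filter.atTop (nhds 0) := by
        simpa using Real.tendsto_pow_log_div_mul_add_atTop 1 0 1 one_ne_zero
      have hone : Filter.Tendsto (fun x : ℝ => 1 / x) Filter.atTop (nhds 0) := by
        simpa [one_div] using tendsto_inv_atTop_zero (𝕜 := ℝ)
      have := hone.add hlog
      simp only [add_zero] at this
      exact this.congr fun t => (add_div 1 (Real.log t) t).symm
    exact squeeze_zero' hnn hbound hupper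
  -- the main integral identity
  have hint : ∫ t in Set.Ioi c, g t = 0 - F c :=
    integral_Ioi_of_hasDerivAt_of_nonneg' hderiv hgpos htend
  have hintg : IntegrableOn g (Set.Ioi c) :=
    integrableOn_Ioi_deriv_of_nonneg' hderiv hgpos htend
  rw [MeasureTheory.integral_Ici_eq_integral_Ioi]
  have hmono : (∫ t in Set.Ioi c, Real.sqrt (1 + Real.log t) / t ^ 2)
      ≤ ∫ t in Set.Ioi c, g t := by
    apply MeasureTheory.integral_mono_of_nonneg _ hintg
    · filter_upwards [ae_restrict_mem measurableSet_Ioi] with t ht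
      have ht1 : 1 ≤ t := le_trans hc (le_of_lt ht)
      obtain ⟨htpos, hs1⟩ := key t ht1
      have hspos : 0 < Real.sqrt (1 + Real.log t) := lt_of_lt_of_le one_pos hs1
      apply div_le_div_of_nonneg_right _ (by positivity)
      have : 1 / Real.sqrt (1 + Real.log t) ≤ Real.sqrt (1 + Real.log t) := by
        rw [div_le_iff₀ hspos]; nlinarith
      linarith
    · filter_upwards [ae_restrict_mem measurableSet_Ioi] with t ht
      have ht1 : 1 ≤ t := le_trans hc (le_of_lt ht)
      exact div_nonneg (Real.sqrt_nonneg _) (sq_nonneg t)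
  rw [hint] at hmono
  simpa [hF] using hmono
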